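/- Let h : ℝ → ℝ be a continuous 1-periodic function and let (L_n) be a sequence of positive reals with L_n → 0. Then for every continuous compactly supported φ : ℝ → ℝ, ∫_ℝ h(x/L_n) φ(x) dx → (∫₀¹ h(y) dy) · (∫_ℝ φ(x) dx) as n → ∞ (i.e. the rescaled periodic functions x ↦ h(x/L_n) converge to their mean in the weak-* sense of L^∞). -/

import Mathlib

open MeasureTheory Filter Topology

/-- If `h` is continuous and 1-periodic and `Lₙ → 0⁺`, then for every
continuous compactly supported `φ`, `∫ h(x/Lₙ) φ(x) dx → (∫₀¹ h) · ∫ φ`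
(weak-* convergence of the rescaled periodic functions to their mean). -/
theorem periodic_rescaled_weak_star_convergence
    (h : ℝ → ℝ) (hcont : Continuous h) (hper : ∀ x, h (x + 1) = h x)
    (L : ℕ → ℝ) (hLpos : ∀ n, 0 < L n) (hL : Tendsto L atTop (𝓝 0)) :
    ∀ φ : ℝ → ℝ, Continuous φ → HasCompactSupport φ →
      Tendsto (fun n => ∫ x : ℝ, h (x / L n) * φ x) atTop
        (𝓝 ((∫ y in (0:ℝ)..1, h y) * ∫ x : ℝ, φ x)) := by
  intro φ hφc hφs
  set M : ℝ := ∫ y in (0:ℝ)..1, h y with hM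
  set g : ℝ → ℝ := fun x => h x - M with hgdef
  have hgc : Continuous g := hcont.sub continuous_const
  have hgper : Function.Periodic g 1 := fun x => by simp [hgdef, hper x]
  have hgzero : ∫ y in (0:ℝ)..1, g y = 0 := by
    rw [show g = fun x => h x - M from rfl]
    rw [intervalIntegral.integral_sub (hcont.intervalIntegrable _ _)
      (intervalIntegrable_const)]
    simp [hM]
  -- bound on g
  obtain ⟨B, hB⟩ : ∃ B, ∀ x, |g x| ≤ B := by
    obtain ⟨C, hC⟩ := (hgper.isBounded_of_continuous one_ne_zero hgc).exists_norm_le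
    exact ⟨C, fun x => hC _ (Set.mem_range_self x)⟩
  have hB0 : 0 ≤ B := le_trans (abs_nonneg _) (hB 0)
  -- support of φ
  obtain ⟨A, hA1, hA⟩ : ∃ A : ℝ, 1 ≤ A ∧ ∀ y, A < |y| → φ y = 0 := by
    obtain ⟨r, hr⟩ := hφs.isBounded.subset_closedBall 0
    refine ⟨max r 1, le_max_right _ _, fun y hy => ?_⟩
    by_contra hy0
    have hmem : y ∈ tsupport φ := subset_tsupport φ (by simpa [Function.mem_support] using hy0)
    have := hr hmem
    rw [Metric.mem_closedBall, Real.dist_eq, sub_zero] at this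
    exact absurd (le_trans this (le_max_left r 1)) (not_le_of_gt hy)
  have hA0 : (0:ℝ) < A := lt_of_lt_of_le one_pos hA1
  have hφu : UniformContinuous φ := hφs.uniformContinuous_of_continuous hφc
  -- compact support of scaled functions / integrability
  have hsupp : ∀ l : ℝ, 0 < l → HasCompactSupport (fun x => φ (l * x)) := by
    intro l hl
    apply HasCompactSupport.intro (isCompact_Icc (a := -(A/l)) (b := A/l))
    intro x hx
    apply hA
    have hx' : A / l < |x| := by
      by_contra hc
      push_neg at hc
      exact hx (abs_le.mp hc)
    rw [abs_mul, abs_of_pos hl]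
    calc A = l * (A / l) := by field_simp
    _ < l * |x| := by exact mul_lt_mul_of_pos_left hx' hl
  have hint : ∀ (l : ℝ), 0 < l → ∀ (ψ : ℝ → ℝ), Continuous ψ →
      Integrable (fun x => ψ x * φ (l * x)) := by
    intro l hl ψ hψ
    have hc : Continuous fun x => ψ x * φ (l * x) :=
      hψ.mul (hφc.comp (continuous_const.mul continuous_id))
    have hcs : HasCompactSupport fun x => ψ x * φ (l * x) := by
      have := (hsupp l hl).mul_left (f := ψ)
      simpa [Pi.mul_def] using this
    exact hc.integrable_of_hasCompactSupport hcs
  -- main decomposition identity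
  have key : ∀ n, (∫ x : ℝ, h (x / L n) * φ x)
      = M * (∫ x : ℝ, φ x) + L n * ∫ x : ℝ, g x * φ (L n * x) := by
    intro n
    set l := L n with hldef
    have hl : 0 < l := hLpos n
    have h1 : (∫ x : ℝ, h x * φ (l * x)) = l⁻¹ * ∫ x : ℝ, h (x / l) * φ x := by
      have := MeasureTheory.Measure.integral_comp_mul_left (fun x => h (x / l) * φ x) l
      have e : (fun x => h (l * x / l) * φ (l * x)) = fun x => h x * φ (l * x) := by
        funext x
        rw [mul_div_cancel_left₀ _ hl.ne']
      rw [show (fun x => h (l * x / l) * φ (l * x)) = fun x => h x * φ (l * x) from e] at this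
      rw [this, smul_eq_mul, abs_inv, abs_of_pos hl]
    have h2 : (∫ x : ℝ, φ (l * x)) = l⁻¹ * ∫ x : ℝ, φ x := by
      have := MeasureTheory.Measure.integral_comp_mul_left φ l
      rw [this, smul_eq_mul, abs_inv, abs_of_pos hl]
    have h3 : (∫ x : ℝ, h x * φ (l * x))
        = (∫ x : ℝ, g x * φ (l * x)) + M * ∫ x : ℝ, φ (l * x) := by
      have i1 : Integrable (fun x => g x * φ (l * x)) := hint l hl g hgc
      have i2 : Integrable (fun x => M * φ (l * x)) :=
        (hint l hl (fun _ => 1) continuous_const).const_mul M |>.congr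
          (Eventually.of_forall fun x => by ring)
      rw [← MeasureTheory.integral_const_mul, ← MeasureTheory.integral_add i1 i2]
      congr 1
      funext x
      simp [hgdef]; ring
    have hF : (∫ x : ℝ, h (x / l) * φ x) = l * ∫ x : ℝ, h x * φ (l * x) := by
      rw [h1]; field_simp
    rw [hF, h3, h2]
    field_simp
    ring
  -- reduce to the error terms tending to zero
  have hsuff : Tendsto (fun n => L n * ∫ x : ℝ, g x * φ (L n * x)) atTop (𝓝 0) := by
    rw [NormedAddCommGroup.tendsto_nhds_zero]
    intro ε hε
    have hden : (0:ℝ) < 2 * (A + 2) * (B + 1) := by positivity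
    set ε' : ℝ := ε / (2 * (A + 2) * (B + 1)) with hε'def
    have hε' : 0 < ε' := by positivity
    obtain ⟨δ, hδ0, hδ⟩ := Metric.uniformContinuous_iff.mp hφu ε' hε'
    have hev : ∀ᶠ n in atTop, L n < min δ 1 := hL.eventually_lt_const (lt_min hδ0 one_pos)
    filter_upwards [hev] with n hn
    set l := L n with hldef
    have hl0 : 0 < l := hLpos n
    have hlδ : l < δ := lt_of_lt_of_le hn (min_le_left _ _)
    have hl1 : l ≤ 1 := le_of_lt (lt_of_lt_of_le hn (min_le_right _ _))
    set N : ℕ := ⌈A / l⌉₊ + 1 with hNdef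
    have hN1 : A / l < N := by
      calc A / l ≤ (⌈A / l⌉₊ : ℝ) := Nat.le_ceil _
      _ < N := by exact_mod_cast Nat.lt_succ_self _
    have hN2 : (N : ℝ) ≤ A / l + 2 := by
      have h0 : (0:ℝ) ≤ A / l := by positivity
      have := Nat.ceil_lt_add_one h0
      push_cast [hNdef]
      linarith
    have hNpos : (0:ℝ) < N := lt_of_le_of_lt (by positivity) hN1
    have hAl : A < l * N := by
      rw [mul_comm]
      exact (div_lt_iff₀ hl0).mp hN1
    set a : ℕ → ℝ := fun i => -(N : ℝ) + i with hadef
    set S : ℝ := ∫ x : ℝ, g x * φ (l * x) with hSdef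
    have hcont' : Continuous fun x => g x * φ (l * x) :=
      hgc.mul (hφc.comp (continuous_const.mul continuous_id))
    -- restrict to Ioc (-N) N
    have step1 : S = ∫ x in Set.Ioc (-(N:ℝ)) N, g x * φ (l * x) := by
      refine (setIntegral_eq_integral_of_forall_compl_eq_zero fun x hx => ?_).symm
      have hx' : (N:ℝ) ≤ |x| := by
        rw [Set.mem_Ioc, not_and_or] at hx
        rcases hx with hx | hx
        · push_neg at hx
          calc (N:ℝ) ≤ -x := by linarith
          _ ≤ |x| := by rw [abs_eq_max_neg]; exact le_max_right _ _
        · push_neg at hx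
          exact le_trans hx.le (le_abs_self x)
      have : φ (l * x) = 0 := by
        apply hA
        rw [abs_mul, abs_of_pos hl0]
        calc A < l * N := hAl
        _ ≤ l * |x| := by exact mul_le_mul_of_nonneg_left hx' hl0.le
      simp [this]
    have step2 : (∫ x in Set.Ioc (-(N:ℝ)) N, g x * φ (l * x))
        = ∫ x in (-(N:ℝ))..N, g x * φ (l * x) := by
      rw [intervalIntegral.integral_of_le (by linarith : -(N:ℝ) ≤ N)]
    have step3 : (∫ x in (-(N:ℝ))..N, g x * φ (l * x))
        = ∑ i ∈ Finset.range (2 * N), ∫ x in a i..a (i + 1), g x * φ (l * x) := by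
      have := intervalIntegral.sum_integral_adjacent_intervals
        (a := a) (n := 2 * N) (μ := volume) (f := fun x => g x * φ (l * x))
        (fun i _ => hcont'.intervalIntegrable _ _)
      rw [this]
      congr 1
      · simp [hadef]
      · simp [hadef]; push_cast; ring
    -- per-interval bound
    have hterm : ∀ i : ℕ, ‖∫ x in a i..(a i + 1), g x * φ (l * x)‖ ≤ B * ε' := by
      intro i
      set k := a i with hkdef
      have hz : ∫ x in k..k + 1, g x = 0 := by
        have := hgper.intervalIntegral_add_eq k 0
        simpa [hgzero] using this
      have heq : (∫ x in k..k + 1, g x * φ (l * x))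
          = ∫ x in k..k + 1, g x * (φ (l * x) - φ (l * k)) := by
        have e2 : (∫ x in k..k + 1, g x * (φ (l * x) - φ (l * k)))
            = (∫ x in k..k + 1, g x * φ (l * x))
              - (∫ x in k..k + 1, g x) * φ (l * k) := by
          rw [← intervalIntegral.integral_mul_const, ← intervalIntegral.integral_sub (g := fun x => g x * φ (l * k))
            (hcont'.intervalIntegrable _ _)
            ((hgc.mul continuous_const).intervalIntegrable _ _)]
          congr 1
          funext x
          ring
        rw [e2, hz]
        ring
      rw [heq]
      have hbound : ∀ x ∈ Set.uIoc k (k + 1), ‖g x * (φ (l * x) - φ (l * k))‖ ≤ B * ε' := by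
        intro x hx
        rw [Set.uIoc_of_le (by linarith : k ≤ k + 1)] at hx
        have hx1 : |x - k| ≤ 1 := by
          rw [abs_le]
          constructor <;> [linarith [hx.1.le]; linarith [hx.2]]
        have hdist : dist (l * x) (l * k) < δ := by
          rw [Real.dist_eq, ← mul_sub, abs_mul, abs_of_pos hl0]
          calc l * |x - k| ≤ l * 1 := mul_le_mul_of_nonneg_left hx1 hl0.le
          _ = l := mul_one l
          _ < δ := hlδ
        have hφb : |φ (l * x) - φ (l * k)| ≤ ε' := by
          have := hδ hdist
          rw [Real.dist_eq] at this
          exact this.le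
        rw [norm_mul]
        exact mul_le_mul (hB x) hφb (abs_nonneg _) hB0
      have := intervalIntegral.norm_integral_le_of_norm_le_const hbound
      simpa using this
    -- sum bound
    have hsum : ‖S‖ ≤ 2 * N * (B * ε') := by
      rw [step1, step2, step3]
      calc ‖∑ i ∈ Finset.range (2 * N), ∫ x in a i..a (i + 1), g x * φ (l * x)‖
          ≤ ∑ i ∈ Finset.range (2 * N), ‖∫ x in a i..a (i + 1), g x * φ (l * x)‖ :=
            norm_sum_le _ _
        _ ≤ ∑ _i ∈ Finset.range (2 * N), B * ε' := by
            refine Finset.sum_le_sum fun i _ => ?_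
            have ha1 : a (i + 1) = a i + 1 := by simp [hadef]; push_cast; ring
            rw [ha1]
            exact hterm i
        _ = 2 * N * (B * ε') := by
            rw [Finset.sum_const, Finset.card_range, nsmul_eq_mul]
            push_cast
            ring
    -- conclude
    have hlN : l * N ≤ A + 2 := by
      calc l * N ≤ l * (A / l + 2) := mul_le_mul_of_nonneg_left hN2 hl0.le
      _ = A + 2 * l := by field_simp
      _ ≤ A + 2 := by linarith
    have hfinal : ‖l * S‖ ≤ 2 * (A + 2) * B * ε' := by
      rw [norm_mul, Real.norm_eq_abs, abs_of_pos hl0]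
      calc l * ‖S‖ ≤ l * (2 * N * (B * ε')) :=
            mul_le_mul_of_nonneg_left hsum hl0.le
      _ = 2 * (l * N) * B * ε' := by ring
      _ ≤ 2 * (A + 2) * B * ε' := by
          have hbe : 0 ≤ B * ε' := mul_nonneg hB0 hε'.le
          nlinarith
    calc ‖l * S‖ ≤ 2 * (A + 2) * B * ε' := hfinal
    _ < 2 * (A + 2) * (B + 1) * ε' := by nlinarith
    _ = ε := by
        rw [hε'def]
        field_simp
  have := (tendsto_const_nhds (x := M * ∫ x : ℝ, φ x) (f := atTop)).add hsuff
  rw [add_zero] at this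
  have heq : (fun n => ∫ x : ℝ, h (x / L n) * φ x)
      = fun n => M * (∫ x : ℝ, φ x) + L n * ∫ x : ℝ, g x * φ (L n * x) := by
    funext n; exact key n
  rw [heq]
  exact this
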